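/- Suppose a measurable set E ⊂ ℝ^n contains two disjoint measurable subsets B and Q with |B| ≥ c₀ h^n and |Q| ≥ c₀ h^n, and suppose v : E → ℝ is measurable with v ≤ a − ξ on B, while the average of v over Q is at least a − ξ/3 for some real a and ξ > 0. Then ∫_E |v − μ|^{n/(n−1)} ≥ c₀ (ξ/3)^{n/(n−1)} h^n, where μ = (1/|E|)∫_E v, in the case μ ≥ a − ξ/3; and in the case μ < a − ξ/3, ∫_E |v − μ|^{n/(n−1)} ≥ c₀ (ξ/3)^{n/(n−1)} h^n as well (using the bound on Q). In all cases ∫_E |v − μ|^{n/(n−1)} ≥ c₀ (ξ/3)^{n/(n−1)} h^n. -/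

import Mathlib

open MeasureTheory

theorem oscillation_dichotomy (n : ℕ) (hn : 2 ≤ n) (h c₀ ξ a : ℝ)
    (hh : 0 < h) (hc₀ : 0 < c₀) (hξ : 0 < ξ)
    (E B Q : Set (Fin n → ℝ)) (hBE : B ⊆ E) (hQE : Q ⊆ E) (hBQ : Disjoint B Q)
    (hEm : MeasurableSet E) (hBm : MeasurableSet B) (hQm : MeasurableSet Q)
    (hEfin : volume E < ⊤) (hEpos : 0 < volume E)
    (hB : ENNReal.ofReal (c₀ * h ^ n) ≤ volume B)
    (hQvol : ENNReal.ofReal (c₀ * h ^ n) ≤ volume Q)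
    (v : (Fin n → ℝ) → ℝ) (hvint : IntegrableOn v E)
    (hvpow : IntegrableOn
        (fun x => |v x - (∫ y in E, v y) / (volume E).toReal| ^ ((n : ℝ) / ((n : ℝ) - 1))) E)
    (hvB : ∀ x ∈ B, v x ≤ a - ξ)
    (hvQ : a - ξ / 3 ≤ (∫ x in Q, v x) / (volume Q).toReal) :
    c₀ * (ξ / 3) ^ ((n : ℝ) / ((n : ℝ) - 1)) * h ^ n ≤
      ∫ x in E, |v x - (∫ y in E, v y) / (volume E).toReal| ^ ((n : ℝ) / ((n : ℝ) - 1)) := by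
  set p : ℝ := (n : ℝ) / ((n : ℝ) - 1) with hp
  set μ : ℝ := (∫ y in E, v y) / (volume E).toReal with hμ
  have hn1 : (1 : ℝ) ≤ (n : ℝ) - 1 := by
    have : (2 : ℝ) ≤ (n : ℝ) := by exact_mod_cast hn
    linarith
  have hp1 : 1 ≤ p := by
    rw [hp, le_div_iff₀ (by linarith)]
    linarith
  have hp0 : 0 ≤ p := by linarith
  have hchn : 0 < c₀ * h ^ n := by positivity
  have hξ3 : (0 : ℝ) < ξ / 3 := by linarith
  -- volumes
  have hBfin : volume B < ⊤ := lt_of_le_of_lt (measure_mono hBE) hEfin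
  have hQfin : volume Q < ⊤ := lt_of_le_of_lt (measure_mono hQE) hEfin
  have hBr : c₀ * h ^ n ≤ (volume B).toReal := by
    rw [← ENNReal.ofReal_le_iff_le_toReal hBfin.ne]
    exact hB
  have hQr : c₀ * h ^ n ≤ (volume Q).toReal := by
    rw [← ENNReal.ofReal_le_iff_le_toReal hQfin.ne]
    exact hQvol
  have hQrpos : 0 < (volume Q).toReal := lt_of_lt_of_le hchn hQr
  -- the integrand is nonneg
  have hnn : ∀ x, 0 ≤ |v x - μ| ^ p := fun x => Real.rpow_nonneg (abs_nonneg _) p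
  have hnnae : 0 ≤ᵐ[volume.restrict E] fun x => |v x - μ| ^ p :=
    Filter.Eventually.of_forall hnn
  rcases le_or_gt (a - 2 * ξ / 3) μ with hcase | hcase
  · -- case 1: use B
    have step1 : (ξ / 3) ^ p * (volume B).toReal ≤ ∫ x in B, |v x - μ| ^ p := by
      have : ∫ x in B, (ξ / 3) ^ p ≤ ∫ x in B, |v x - μ| ^ p := by
        apply setIntegral_mono_on (integrableOn_const hBfin.ne)
          (hvpow.mono_set hBE) hBm
        intro x hx
        have h1 : v x ≤ a - ξ := hvB x hx
        have h2 : ξ / 3 ≤ |v x - μ| := by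
          rw [abs_sub_comm, abs_of_nonneg (by linarith)]
          linarith
        exact Real.rpow_le_rpow (le_of_lt hξ3) h2 hp0
      rw [setIntegral_const, smul_eq_mul, measureReal_def] at this
      linarith
    have step2 : ∫ x in B, |v x - μ| ^ p ≤ ∫ x in E, |v x - μ| ^ p :=
      setIntegral_mono_set hvpow hnnae (HasSubset.Subset.eventuallyLE hBE)
    calc c₀ * (ξ / 3) ^ p * h ^ n = (ξ / 3) ^ p * (c₀ * h ^ n) := by ring
      _ ≤ (ξ / 3) ^ p * (volume B).toReal := by
          exact mul_le_mul_of_nonneg_left hBr (Real.rpow_nonneg hξ3.le p)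
      _ ≤ ∫ x in E, |v x - μ| ^ p := le_trans step1 step2
  · -- case 2: use Q and Jensen
    haveI : Fact (volume Q < ⊤) := ⟨hQfin⟩
    haveI : NeZero (volume.restrict Q) := by
      refine ⟨fun h0 => ?_⟩
      rw [Measure.restrict_eq_zero] at h0
      exact (lt_of_lt_of_le (ENNReal.ofReal_pos.2 hchn) hQvol).ne' h0
    have hintQE : IntegrableOn (fun x => v x - μ) E :=
      hvint.sub (integrableOn_const hEfin.ne)
    have hintQ : IntegrableOn (fun x => v x - μ) Q := hintQE.mono_set hQE
    have hintQabs : IntegrableOn (fun x => |v x - μ|) Q := hintQ.abs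
    -- lower bound on the average of |v - μ| over Q
    have havg : ξ / 3 ≤ ⨍ x in Q, |v x - μ| := by
      have hI : (ξ / 3) * (volume Q).toReal ≤ ∫ x in Q, |v x - μ| := by
        have h1 : (a - ξ / 3) * (volume Q).toReal ≤ ∫ x in Q, v x := by
          rw [← le_div_iff₀ hQrpos]
          exact hvQ
        have h2 : ∫ x in Q, (v x - μ) ≤ ∫ x in Q, |v x - μ| :=
          integral_mono hintQ hintQabs fun x => le_abs_self _
        have h3 : ∫ x in Q, (v x - μ) = (∫ x in Q, v x) - μ * (volume Q).toReal := by
          rw [integral_sub (hvint.mono_set hQE) (integrableOn_const hQfin.ne),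
            setIntegral_const, smul_eq_mul, measureReal_def]
          ring
        nlinarith [hQrpos]
      rw [setAverage_eq, smul_eq_mul, ← div_eq_inv_mul, measureReal_def, le_div_iff₀ hQrpos]
      linarith
    have hfs : ∀ᵐ x ∂(volume.restrict Q), |v x - μ| ∈ Set.Ici (0:ℝ) :=
      Filter.Eventually.of_forall fun x => Set.mem_Ici.2 (abs_nonneg _)
    have hjensen : (⨍ x in Q, |v x - μ|) ^ p ≤ ⨍ x in Q, |v x - μ| ^ p := by
      have hconv : ConvexOn ℝ (Set.Ici (0:ℝ)) fun t : ℝ => t ^ p := convexOn_rpow hp1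
      have hcont : ContinuousOn (fun t : ℝ => t ^ p) (Set.Ici (0:ℝ)) := fun t _ =>
        (Real.continuousAt_rpow_const t p (Or.inr hp0)).continuousWithinAt
      exact hconv.map_average_le hcont isClosed_Ici hfs hintQabs (hvpow.mono_set hQE)
    have step1 : (ξ / 3) ^ p * (volume Q).toReal ≤ ∫ x in Q, |v x - μ| ^ p := by
      have h4 : (ξ / 3) ^ p ≤ ⨍ x in Q, |v x - μ| ^ p :=
        le_trans (Real.rpow_le_rpow hξ3.le havg hp0) hjensen
      rw [setAverage_eq, smul_eq_mul, ← div_eq_inv_mul, measureReal_def, le_div_iff₀ hQrpos] at h4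
      linarith
    have step2 : ∫ x in Q, |v x - μ| ^ p ≤ ∫ x in E, |v x - μ| ^ p :=
      setIntegral_mono_set hvpow hnnae (HasSubset.Subset.eventuallyLE hQE)
    calc c₀ * (ξ / 3) ^ p * h ^ n = (ξ / 3) ^ p * (c₀ * h ^ n) := by ring
      _ ≤ (ξ / 3) ^ p * (volume Q).toReal := by
          exact mul_le_mul_of_nonneg_left hQr (Real.rpow_nonneg hξ3.le p)
      _ ≤ ∫ x in E, |v x - μ| ^ p := le_trans step1 step2
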